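/- For any upper unitriangular 4×4 complex matrix X, the minors satisfy the exchange identity Δ^{12}_{24}(X)·Δ^{23}_{34}(X) = Δ^{123}_{234}(X)·Δ^{2}_{4}(X) + Δ^{3}_{4}(X)·Δ^{12}_{34}(X), where Δ^{L}_{C}(X) denotes the minor of X with rows L and columns C. -/
import Mathlib

open Matrix

theorem exchange_identity_minors
    (X : Matrix (Fin 4) (Fin 4) ℂ)
    (hd : ∀ i, X i i = 1)
    (hl : ∀ i j : Fin 4, (j : ℕ) < (i : ℕ) → X i j = 0) :
    det !![X 0 1, X 0 3; X 1 1, X 1 3] * det !![X 1 2, X 1 3; X 2 2, X 2 3] =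
      det !![X 0 1, X 0 2, X 0 3; X 1 1, X 1 2, X 1 3; X 2 1, X 2 2, X 2 3] * X 1 3
        + X 2 3 * det !![X 0 2, X 0 3; X 1 2, X 1 3] := by
  simp [det_fin_two, det_fin_three, hd, hl 2 1 (by norm_num)]
  ring
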